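/- Let D^m be a c-biased probability distribution over binary strings of length m, and let D_IND^m be the distribution where each of the m bits is independently 1 with probability c. Then for every 1 ≤ k ≤ m, the probability under D^m that a string has at least k ones is at most the corresponding probability under D_IND^m. -/

import Mathlib

open Finset

private def Ncnt {n : ℕ} (x : Fin n → Bool) : ℕ := (univ.filter fun i => x i = true).card

private def Wt (c : ℝ) (n : ℕ) (x : Fin n → Bool) : ℝ := c ^ Ncnt x * (1 - c) ^ (n - Ncnt x)

private def Bt (c : ℝ) (n k : ℕ) : ℝ := ∑ x : Fin n → Bool, if k ≤ Ncnt x then Wt c n x else 0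

private lemma sum_cons {n : ℕ} (f : (Fin (n+1) → Bool) → ℝ) :
    ∑ x, f x = (∑ y : Fin n → Bool, f (Fin.cons false y)) + ∑ y, f (Fin.cons true y) := by
  rw [← (Fin.consEquiv (fun _ => Bool)).sum_comp f]
  rw [Fintype.sum_prod_type]
  rw [Fintype.sum_bool]
  simp [Fin.consEquiv, add_comm]

private lemma Ncnt_cons_true {n : ℕ} (y : Fin n → Bool) :
    Ncnt (Fin.cons true y) = Ncnt y + 1 := by
  simp only [Ncnt, Finset.card_filter]
  rw [Fin.sum_univ_succ]
  simp [add_comm]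

private lemma Ncnt_cons_false {n : ℕ} (y : Fin n → Bool) :
    Ncnt (Fin.cons false y) = Ncnt y := by
  simp only [Ncnt, Finset.card_filter]
  rw [Fin.sum_univ_succ]
  simp

private lemma Ncnt_le {n : ℕ} (y : Fin n → Bool) : Ncnt y ≤ n := by
  simpa [Ncnt] using (Finset.card_filter_le univ (fun i => y i = true)).trans_eq (by simp)

private lemma Wt_cons_true (c : ℝ) {n : ℕ} (y : Fin n → Bool) :
    Wt c (n+1) (Fin.cons true y) = c * Wt c n y := by
  simp only [Wt, Ncnt_cons_true, Nat.succ_sub_succ]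
  ring

private lemma Wt_cons_false (c : ℝ) {n : ℕ} (y : Fin n → Bool) :
    Wt c (n+1) (Fin.cons false y) = (1 - c) * Wt c n y := by
  simp only [Wt, Ncnt_cons_false]
  rw [Nat.succ_sub (Ncnt_le y), pow_succ]
  ring

private lemma Wt_nonneg {c : ℝ} (hc0 : 0 ≤ c) (hc1 : c ≤ 1) (n : ℕ) (x : Fin n → Bool) :
    0 ≤ Wt c n x :=
  mul_nonneg (pow_nonneg hc0 _) (pow_nonneg (by linarith) _)

private lemma Bt_nonneg {c : ℝ} (hc0 : 0 ≤ c) (hc1 : c ≤ 1) (n k : ℕ) : 0 ≤ Bt c n k := by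
  refine Finset.sum_nonneg fun x _ => ?_
  split
  · exact Wt_nonneg hc0 hc1 n x
  · exact le_refl 0

private lemma Bt_mono {c : ℝ} (hc0 : 0 ≤ c) (hc1 : c ≤ 1) (n k : ℕ) :
    Bt c n (k+1) ≤ Bt c n k := by
  refine Finset.sum_le_sum fun x _ => ?_
  by_cases h1 : k + 1 ≤ Ncnt x
  · rw [if_pos h1, if_pos (by omega)]
  · rw [if_neg h1]
    split
    · exact Wt_nonneg hc0 hc1 n x
    · exact le_refl 0

private lemma Bt_zero (c : ℝ) : ∀ n, Bt c n 0 = 1 := by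
  intro n
  induction n with
  | zero =>
    simp [Bt, Wt, Ncnt]
  | succ n ih =>
    rw [Bt, sum_cons]
    simp only [Nat.zero_le, if_pos, Wt_cons_true, Wt_cons_false]
    rw [← Finset.mul_sum, ← Finset.mul_sum]
    have h1 : (∑ y : Fin n → Bool, Wt c n y) = 1 := by
      simpa [Bt] using ih
    rw [h1]; ring

private lemma Bt_rec (c : ℝ) (n j : ℕ) :
    Bt c (n+1) (j+1) = c * Bt c n j + (1 - c) * Bt c n (j+1) := by
  rw [Bt, sum_cons]
  have h1 : ∀ y : Fin n → Bool,
      (if j + 1 ≤ Ncnt (Fin.cons false y) then Wt c (n+1) (Fin.cons false y) else 0)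
        = (1 - c) * (if j + 1 ≤ Ncnt y then Wt c n y else 0) := by
    intro y
    rw [Ncnt_cons_false, Wt_cons_false]
    split <;> simp
  have h2 : ∀ y : Fin n → Bool,
      (if j + 1 ≤ Ncnt (Fin.cons true y) then Wt c (n+1) (Fin.cons true y) else 0)
        = c * (if j ≤ Ncnt y then Wt c n y else 0) := by
    intro y
    rw [Ncnt_cons_true, Wt_cons_true]
    have h3 : (j + 1 ≤ Ncnt y + 1) ↔ (j ≤ Ncnt y) := by omega
    rw [if_congr h3 rfl rfl]
    split <;> simp
  rw [Finset.sum_congr rfl (fun y _ => h1 y), Finset.sum_congr rfl (fun y _ => h2 y)]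
  rw [← Finset.mul_sum, ← Finset.mul_sum, Bt, Bt]
  ring

private def Hbias (c : ℝ) (m : ℕ) (p : (Fin m → Bool) → ℝ) : Prop :=
  ∀ ℓ : ℕ, ∀ hℓ : ℓ < m, ∀ s : Fin ℓ → Bool,
    (∑ x : Fin m → Bool,
        if (∀ i : Fin ℓ, x (Fin.castLE (le_of_lt hℓ) i) = s i) ∧ x ⟨ℓ, hℓ⟩ = true
        then p x else 0)
      ≤ c * ∑ x : Fin m → Bool,
          if (∀ i : Fin ℓ, x (Fin.castLE (le_of_lt hℓ) i) = s i) then p x else 0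

private lemma castLE_succ' {ℓ n : ℕ} (h : ℓ + 1 ≤ n + 1) (i : Fin ℓ) :
    Fin.castLE h i.succ = (Fin.castLE (Nat.succ_le_succ_iff.mp h) i).succ := by
  ext; simp

private lemma cons_eval_succ {n ℓ : ℕ} (hℓ : ℓ < n) (b' : Bool) (y : Fin n → Bool) :
    (Fin.cons b' y : Fin (n+1) → Bool) ⟨ℓ+1, Nat.succ_lt_succ hℓ⟩ = y ⟨ℓ, hℓ⟩ := by
  have h : (⟨ℓ+1, Nat.succ_lt_succ hℓ⟩ : Fin (n+1)) = (⟨ℓ, hℓ⟩ : Fin n).succ := rfl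
  rw [h, Fin.cons_succ]

private lemma cond_cons {n ℓ : ℕ} (hℓ : ℓ < n) (b b' : Bool) (s : Fin ℓ → Bool)
    (y : Fin n → Bool) :
    (∀ i : Fin (ℓ+1), (Fin.cons b' y : Fin (n+1) → Bool)
        (Fin.castLE (le_of_lt (Nat.succ_lt_succ hℓ)) i)
          = (Fin.cons b s : Fin (ℓ+1) → Bool) i)
      ↔ (b' = b ∧ ∀ i : Fin ℓ, y (Fin.castLE (le_of_lt hℓ) i) = s i) := by
  rw [Fin.forall_fin_succ]
  constructor
  · rintro ⟨h0, hs⟩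
    refine ⟨by simpa using h0, fun i => ?_⟩
    have h4 := hs i
    rw [castLE_succ'] at h4
    simpa [Fin.cons_succ] using h4
  · rintro ⟨h0, hs⟩
    refine ⟨by simpa using h0, fun i => ?_⟩
    rw [castLE_succ']
    simpa [Fin.cons_succ] using hs i

private lemma Hbias_cons (c : ℝ) {n : ℕ} (p : (Fin (n+1) → Bool) → ℝ)
    (h : Hbias c (n+1) p) (b : Bool) :
    Hbias c n (fun y => p (Fin.cons b y)) := by
  intro ℓ hℓ s
  have h' := h (ℓ+1) (Nat.succ_lt_succ hℓ) (Fin.cons b s)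
  rw [sum_cons (fun x => if (∀ i : Fin (ℓ+1), x (Fin.castLE (le_of_lt (Nat.succ_lt_succ hℓ)) i)
      = (Fin.cons b s : Fin (ℓ+1) → Bool) i) ∧ x ⟨ℓ+1, Nat.succ_lt_succ hℓ⟩ = true
      then p x else 0)] at h'
  rw [sum_cons (fun x => if (∀ i : Fin (ℓ+1), x (Fin.castLE (le_of_lt (Nat.succ_lt_succ hℓ)) i)
      = (Fin.cons b s : Fin (ℓ+1) → Bool) i) then p x else 0)] at h'
  simp only [cond_cons hℓ b, cons_eval_succ hℓ] at h'
  cases b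
  · simpa using h'
  · simpa using h'

private lemma mass_true_le (c : ℝ) {n : ℕ} (p : (Fin (n+1) → Bool) → ℝ)
    (h : Hbias c (n+1) p) :
    (∑ y : Fin n → Bool, p (Fin.cons true y)) ≤ c * ∑ x : Fin (n+1) → Bool, p x := by
  have h' := h 0 (Nat.succ_pos n) (fun i => i.elim0)
  rw [sum_cons (fun x => if (∀ i : Fin 0, x (Fin.castLE (le_of_lt (Nat.succ_pos n)) i)
      = i.elim0) ∧ x ⟨0, Nat.succ_pos n⟩ = true then p x else 0)] at h'
  have e0 : ∀ (b : Bool) (y : Fin n → Bool),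
      (Fin.cons b y : Fin (n+1) → Bool) ⟨0, Nat.succ_pos n⟩ = b := fun b y => rfl
  simp only [e0] at h'
  simpa using h'

private lemma main_ineq (c : ℝ) (hc0 : 0 ≤ c) (hc1 : c ≤ 1) :
    ∀ (m : ℕ) (p : (Fin m → Bool) → ℝ), (∀ x, 0 ≤ p x) → Hbias c m p → ∀ k : ℕ,
      (∑ x, if k ≤ Ncnt x then p x else 0) ≤ (∑ x, p x) * Bt c m k := by
  intro m
  induction m with
  | zero =>
    intro p hp _ k
    match k with
    | 0 => simp [Bt, Wt, Ncnt]
    | k+1 =>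
      have h5 : ∀ x : Fin 0 → Bool, Ncnt x = 0 := by intro x; simp [Ncnt]
      simp only [h5]
      have hB : Bt c 0 (k+1) = 0 := by simp [Bt, h5]
      rw [hB, mul_zero]
      simp
  | succ n ih =>
    intro p hp hH k
    match k with
    | 0 =>
      rw [Bt_zero, mul_one]
      simp
    | j+1 =>
      have hq0 := Hbias_cons c p hH false
      have hq1 := Hbias_cons c p hH true
      have hp0 : ∀ y, 0 ≤ p (Fin.cons false y) := fun y => hp _
      have hp1 : ∀ y, 0 ≤ p (Fin.cons true y) := fun y => hp _
      have IH0 := ih (fun y => p (Fin.cons false y)) hp0 hq0 (j+1)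
      have IH1 := ih (fun y => p (Fin.cons true y)) hp1 hq1 j
      have hT1 := mass_true_le c p hH
      rw [sum_cons (fun x => if j+1 ≤ Ncnt x then p x else 0)]
      have e1 : ∀ y : Fin n → Bool,
          (if j+1 ≤ Ncnt (Fin.cons false y) then p (Fin.cons false y) else 0)
            = (if j+1 ≤ Ncnt y then p (Fin.cons false y) else 0) := by
        intro y; rw [Ncnt_cons_false]
      have e2 : ∀ y : Fin n → Bool,
          (if j+1 ≤ Ncnt (Fin.cons true y) then p (Fin.cons true y) else 0)
            = (if j ≤ Ncnt y then p (Fin.cons true y) else 0) := by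
        intro y; rw [Ncnt_cons_true]
        exact if_congr (by omega) rfl rfl
      rw [Finset.sum_congr rfl (fun y _ => e1 y), Finset.sum_congr rfl (fun y _ => e2 y)]
      rw [sum_cons p, Bt_rec]
      set T0 := ∑ y : Fin n → Bool, p (Fin.cons false y) with hT0def
      set T1 := ∑ y : Fin n → Bool, p (Fin.cons true y) with hT1def
      have hT0nn : 0 ≤ T0 := Finset.sum_nonneg fun y _ => hp _
      have hT1nn : 0 ≤ T1 := Finset.sum_nonneg fun y _ => hp _
      have hT1' : T1 ≤ c * (T0 + T1) := by
        have h6 := hT1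
        rw [sum_cons p] at h6
        exact h6
      have hBmono := Bt_mono hc0 hc1 n j
      have hBnn := Bt_nonneg hc0 hc1 n (j+1)
      have hBnn' := Bt_nonneg hc0 hc1 n j
      calc (∑ y : Fin n → Bool, if j+1 ≤ Ncnt y then p (Fin.cons false y) else 0)
            + (∑ y : Fin n → Bool, if j ≤ Ncnt y then p (Fin.cons true y) else 0)
          ≤ T0 * Bt c n (j+1) + T1 * Bt c n j := add_le_add IH0 IH1
        _ ≤ (T0 + T1) * (c * Bt c n j + (1 - c) * Bt c n (j+1)) := by
            nlinarith [mul_nonneg (sub_nonneg.mpr hT1') (sub_nonneg.mpr hBmono)]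

open Finset in
/-- A `c`-biased distribution over `{0,1}^m` is stochastically dominated (for
counts of ones) by the product distribution with independent `Bernoulli(c)`
bits: for every `1 ≤ k ≤ m`, the probability of seeing at least `k` ones under
the `c`-biased distribution is at most the corresponding probability under the
independent distribution. -/
theorem stmt8 (m : ℕ) (hm : 1 ≤ m) (c : ℝ) (hc0 : 0 ≤ c) (hc1 : c ≤ 1)
    (p : (Fin m → Bool) → ℝ) (hp0 : ∀ x, 0 ≤ p x) (hp1 : ∑ x, p x = 1)
    (hbase : (∑ x : Fin m → Bool, if x ⟨0, hm⟩ = true then p x else 0) ≤ c)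
    (hstep : ∀ ℓ : ℕ, 1 ≤ ℓ → ∀ hℓ : ℓ < m, ∀ s : Fin ℓ → Bool,
      (∑ x : Fin m → Bool,
          if (∀ i : Fin ℓ, x (Fin.castLE (le_of_lt hℓ) i) = s i) ∧ x ⟨ℓ, hℓ⟩ = true
          then p x else 0)
        ≤ c * ∑ x : Fin m → Bool,
            if (∀ i : Fin ℓ, x (Fin.castLE (le_of_lt hℓ) i) = s i) then p x else 0)
    (k : ℕ) (hk1 : 1 ≤ k) (hk2 : k ≤ m) :
    (∑ x : Fin m → Bool,
        if k ≤ (univ.filter fun i => x i = true).card then p x else 0)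
      ≤ ∑ x : Fin m → Bool,
          if k ≤ (univ.filter fun i => x i = true).card then
            c ^ (univ.filter fun i => x i = true).card *
              (1 - c) ^ (m - (univ.filter fun i => x i = true).card)
          else 0 := by
  have hH : Hbias c m p := by
    intro ℓ hℓ s
    match ℓ, s with
    | 0, s =>
      have e1 : (∑ x : Fin m → Bool,
          if (∀ i : Fin 0, x (Fin.castLE (le_of_lt hℓ) i) = s i) ∧ x ⟨0, hℓ⟩ = true
          then p x else 0) = ∑ x : Fin m → Bool, if x ⟨0, hm⟩ = true then p x else 0 := by
        refine Finset.sum_congr rfl fun x _ => ?_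
        refine if_congr ?_ rfl rfl
        exact ⟨fun h => h.2, fun h => ⟨fun i => i.elim0, h⟩⟩
      have e2 : (∑ x : Fin m → Bool,
          if (∀ i : Fin 0, x (Fin.castLE (le_of_lt hℓ) i) = s i) then p x else 0) = 1 := by
        rw [← hp1]
        refine Finset.sum_congr rfl fun x _ => ?_
        rw [if_pos (fun i => i.elim0)]
      rw [e1, e2, mul_one]
      exact hbase
    | ℓ+1, s => exact hstep (ℓ+1) (Nat.succ_le_succ (Nat.zero_le ℓ)) hℓ s
  have h := main_ineq c hc0 hc1 m p hp0 hH k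
  rw [hp1, one_mul] at h
  simp only [Bt, Wt, Ncnt] at h
  convert h <;> congr
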